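/- Few shifts have large correlation with any fixed direction: for every x ∈ ℝ^L, every unit vector Q ∈ ℝ^L (‖Q‖ = 1), and every h > 0, the number of shifts N_Q(h) = |{ ℓ ∈ {0,…,L−1} : L^{−1/2}·|⟨x, R_ℓ^{−1} Q⟩| ≥ h }| satisfies N_Q(h) ≤ h^{−2}·‖ℱ*x‖_∞², where ‖ℱ*x‖_∞ = max_{0≤k≤L−1} |(ℱ*x)_k| is the maximal modulus of a DFT coefficient of x. -/

import Mathlib

open scoped ENNReal

namespace MRAformal

/-- The DFT coefficients `(ℱ*x)_k = L^{−1/2}·∑_j x_j·e^{−2πi·kj/L}` of `x ∈ ℝ^L`. -/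
noncomputable def dft (L : ℕ) (x : Fin L → ℝ) (k : Fin L) : ℂ :=
  (Real.sqrt L : ℂ)⁻¹ *
    ∑ j : Fin L, (x j : ℂ) *
      Complex.exp (-2 * (Real.pi : ℂ) * Complex.I * (k.val : ℂ) * (j.val : ℂ) / (L : ℂ))

noncomputable def ch (L : ℕ) (a : ℤ) : ℂ :=
  Complex.exp (2 * (Real.pi : ℂ) * Complex.I * (a : ℂ) / (L : ℂ))

lemma ch_add (L : ℕ) (a b : ℤ) : ch L (a + b) = ch L a * ch L b := by
  rw [ch, ch, ch, ← Complex.exp_add]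
  congr 1
  push_cast
  ring

lemma ch_zero (L : ℕ) : ch L 0 = 1 := by simp [ch]

lemma ch_conj (L : ℕ) (a : ℤ) : (starRingEnd ℂ) (ch L a) = ch L (-a) := by
  rw [ch, ch, ← Complex.exp_conj]
  congr 1
  simp only [map_div₀, map_mul, Complex.conj_I, Complex.conj_ofNat, map_intCast,
    map_natCast, Complex.conj_ofReal]
  push_cast
  ring

lemma ch_dvd (L : ℕ) (hL : 0 < L) {a : ℤ} (h : (L : ℤ) ∣ a) : ch L a = 1 := by
  obtain ⟨t, rfl⟩ := h
  have hL' : (L : ℂ) ≠ 0 := Nat.cast_ne_zero.mpr hL.ne'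
  rw [ch, show 2 * (Real.pi : ℂ) * Complex.I * (((L : ℤ) * t : ℤ) : ℂ) / (L : ℂ)
      = (t : ℂ) * (2 * (Real.pi : ℂ) * Complex.I) by push_cast; field_simp]
  exact Complex.exp_int_mul_two_pi_mul_I t

lemma ch_eq_one_iff (L : ℕ) (hL : 0 < L) (a : ℤ) : ch L a = 1 ↔ (L : ℤ) ∣ a := by
  constructor
  · intro hc
    rw [ch, Complex.exp_eq_one_iff] at hc
    obtain ⟨m, hm⟩ := hc
    refine ⟨m, ?_⟩
    have hL' : (L : ℂ) ≠ 0 := Nat.cast_ne_zero.mpr hL.ne'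
    have hπ : (Real.pi : ℂ) ≠ 0 := Complex.ofReal_ne_zero.mpr Real.pi_ne_zero
    have h2 : (a : ℂ) = (L : ℂ) * (m : ℂ) := by
      field_simp at hm
      have h3 : 2 * (Real.pi : ℂ) * Complex.I * (a : ℂ)
          = 2 * (Real.pi : ℂ) * Complex.I * ((L : ℂ) * (m : ℂ)) := by
        rw [hm]
      exact mul_left_cancel₀ (by simp [hπ, Complex.I_ne_zero]) h3
    exact_mod_cast h2
  · exact ch_dvd L hL

lemma ch_congr (L : ℕ) (hL : 0 < L) {a b : ℤ} (h : a % (L : ℤ) = b % (L : ℤ)) :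
    ch L a = ch L b := by
  have hd : (L : ℤ) ∣ a - b := by
    have := Int.ModEq.dvd (show a ≡ b [ZMOD (L : ℤ)] from h)
    exact dvd_sub_comm.mp this
  calc ch L a = ch L (b + (a - b)) := by ring_nf
    _ = ch L b * ch L (a - b) := ch_add ..
    _ = ch L b := by rw [ch_dvd L hL hd, mul_one]

lemma ch_nat_mul (L : ℕ) (k : ℕ) (a : ℤ) : ch L ((k : ℤ) * a) = ch L a ^ k := by
  induction k with
  | zero => simp [ch_zero]
  | succ k ih =>
    have : ((k + 1 : ℕ) : ℤ) * a = (k : ℤ) * a + a := by push_cast; ring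
    rw [this, ch_add, ih, pow_succ]

lemma ch_orth (L : ℕ) (hL : 0 < L) (a : ℤ) :
    ∑ k : Fin L, ch L ((k.1 : ℤ) * a) = if (L : ℤ) ∣ a then (L : ℂ) else 0 := by
  have : ∑ k : Fin L, ch L ((k.1 : ℤ) * a) = ∑ i ∈ Finset.range L, ch L a ^ i := by
    rw [← Fin.sum_univ_eq_sum_range (fun i => ch L a ^ i) L]
    exact Finset.sum_congr rfl fun k _ => ch_nat_mul L k.1 a
  rw [this]
  split_ifs with h
  · rw [show ch L a = 1 from ch_dvd L hL h]
    simp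
  · have h1 : ch L a ≠ 1 := fun hc => h ((ch_eq_one_iff L hL a).1 hc)
    rw [geom_sum_eq h1]
    have h2 : ch L a ^ L = 1 := by
      rw [← ch_nat_mul]
      exact ch_dvd L hL ⟨a, rfl⟩
    simp [h2]

lemma dvd_iff_eq (L : ℕ) (j j' : Fin L) :
    (L : ℤ) ∣ ((j'.1 : ℤ) - (j.1 : ℤ)) ↔ j = j' := by
  constructor
  · rintro ⟨t, ht⟩
    have h1 := j.2
    have h2 := j'.2
    have hLpos : (0:ℤ) < (L:ℤ) := by exact_mod_cast lt_of_le_of_lt (Nat.zero_le _) j.2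
    have ht0 : t = 0 := by
      rcases lt_trichotomy t 0 with h | h | h
      · nlinarith [(by omega : t ≤ -1)]
      · exact h
      · nlinarith [(by omega : 1 ≤ t)]
    rw [ht0, mul_zero, sub_eq_zero] at ht
    exact Fin.ext (by exact_mod_cast ht.symm)
  · rintro rfl; simp

lemma fin_sub_val (L : ℕ) [NeZero L] (j m : Fin L) :
    ((j - m).1 : ℤ) % (L : ℤ) = ((j.1 : ℤ) - (m.1 : ℤ)) % (L : ℤ) := by
  have hm : m.1 ≤ L := m.2.le
  have : (j - m).1 = (L - m.1 + j.1) % L := by rw [Fin.sub_def]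
  rw [this]
  push_cast [Nat.cast_sub hm]
  rw [show (L : ℤ) - (m.1 : ℤ) + (j.1 : ℤ) = ((j.1 : ℤ) - (m.1 : ℤ)) + (L : ℤ) * 1 by ring,
    Int.add_mul_emod_self_left]
  exact Int.emod_emod_of_dvd _ dvd_rfl

lemma parseval (L : ℕ) (hL : 0 < L) (f : Fin L → ℂ) :
    ∑ k : Fin L, ((∑ j, f j * ch L (-((k.1 : ℤ) * (j.1 : ℤ)))) *
        (starRingEnd ℂ) (∑ j, f j * ch L (-((k.1 : ℤ) * (j.1 : ℤ)))))
      = (L : ℂ) * ∑ j, f j * (starRingEnd ℂ) (f j) := by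
  have expand : ∀ k : Fin L,
      (∑ j, f j * ch L (-((k.1 : ℤ) * (j.1 : ℤ)))) *
        (starRingEnd ℂ) (∑ j, f j * ch L (-((k.1 : ℤ) * (j.1 : ℤ))))
      = ∑ j, ∑ j', (f j * (starRingEnd ℂ) (f j')) *
          ch L ((k.1 : ℤ) * ((j'.1 : ℤ) - (j.1 : ℤ))) := by
    intro k
    rw [map_sum, Finset.sum_mul_sum]
    refine Finset.sum_congr rfl fun j _ => Finset.sum_congr rfl fun j' _ => ?_
    rw [map_mul, ch_conj, neg_neg]
    rw [show (k.1 : ℤ) * ((j'.1 : ℤ) - (j.1 : ℤ))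
        = -((k.1 : ℤ) * (j.1 : ℤ)) + (k.1 : ℤ) * (j'.1 : ℤ) by ring, ch_add]
    ring
  calc ∑ k : Fin L, ((∑ j, f j * ch L (-((k.1 : ℤ) * (j.1 : ℤ)))) *
        (starRingEnd ℂ) (∑ j, f j * ch L (-((k.1 : ℤ) * (j.1 : ℤ)))))
      = ∑ k : Fin L, ∑ j, ∑ j', (f j * (starRingEnd ℂ) (f j')) *
          ch L ((k.1 : ℤ) * ((j'.1 : ℤ) - (j.1 : ℤ))) := Finset.sum_congr rfl fun k _ => expand k
    _ = ∑ j, ∑ j', (f j * (starRingEnd ℂ) (f j')) *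
          ∑ k : Fin L, ch L ((k.1 : ℤ) * ((j'.1 : ℤ) - (j.1 : ℤ))) := by
        rw [Finset.sum_comm]
        refine Finset.sum_congr rfl fun j _ => ?_
        rw [Finset.sum_comm]
        exact Finset.sum_congr rfl fun j' _ => (Finset.mul_sum _ _ _).symm
    _ = ∑ j, ∑ j', (f j * (starRingEnd ℂ) (f j')) *
          (if j' = j then (L : ℂ) else 0) := by
        refine Finset.sum_congr rfl fun j _ => Finset.sum_congr rfl fun j' _ => ?_
        rw [ch_orth L hL]
        congr 1
        simp only [dvd_iff_eq]
        by_cases hjj : j = j' <;> simp [hjj, eq_comm]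
    _ = (L : ℂ) * ∑ j, f j * (starRingEnd ℂ) (f j) := by
        rw [Finset.mul_sum]
        refine Finset.sum_congr rfl fun j _ => ?_
        simp only [mul_ite, mul_zero, Finset.sum_ite_eq', Finset.mem_univ, if_true]
        ring


lemma corr_dft (L : ℕ) [NeZero L] (x Q : Fin L → ℝ) (k : Fin L) :
    ∑ ℓ : Fin L, ((∑ j, x j * Q (j - ℓ) : ℝ) : ℂ) * ch L (-((k.1 : ℤ) * (ℓ.1 : ℤ)))
      = (∑ j, (x j : ℂ) * ch L (-((k.1 : ℤ) * (j.1 : ℤ)))) *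
        (∑ m, (Q m : ℂ) * ch L ((k.1 : ℤ) * (m.1 : ℤ))) := by
  have hL : 0 < L := Nat.pos_of_ne_zero (NeZero.ne L)
  rw [Finset.sum_mul_sum]
  have lhs1 : ∀ ℓ : Fin L, ((∑ j, x j * Q (j - ℓ) : ℝ) : ℂ) * ch L (-((k.1 : ℤ) * (ℓ.1 : ℤ)))
      = ∑ j, ((x j : ℂ) * (Q (j - ℓ) : ℂ)) * ch L (-((k.1 : ℤ) * (ℓ.1 : ℤ))) := by
    intro ℓ
    rw [← Finset.sum_mul]
    push_cast
    ring
  rw [Finset.sum_congr rfl fun ℓ _ => lhs1 ℓ, Finset.sum_comm]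
  refine Finset.sum_congr rfl fun j _ => ?_
  refine Fintype.sum_equiv (Equiv.subLeft j) _ _ fun ℓ => ?_
  simp only [Equiv.subLeft_apply]
  have h1 : ((j - ℓ).1 : ℤ) ≡ (j.1 : ℤ) - (ℓ.1 : ℤ) [ZMOD (L : ℤ)] := fin_sub_val L j ℓ
  have h2 : (-((k.1 : ℤ) * (j.1 : ℤ)) + (k.1 : ℤ) * ((j - ℓ).1 : ℤ))
      ≡ -((k.1 : ℤ) * (j.1 : ℤ)) + (k.1 : ℤ) * ((j.1 : ℤ) - (ℓ.1 : ℤ)) [ZMOD (L : ℤ)] :=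
    (h1.mul_left _).add_left _
  have h3 : ch L (-((k.1 : ℤ) * (ℓ.1 : ℤ)))
      = ch L (-((k.1 : ℤ) * (j.1 : ℤ)) + (k.1 : ℤ) * ((j - ℓ).1 : ℤ)) := by
    refine ch_congr L hL ?_
    have h4 : -((k.1 : ℤ) * (j.1 : ℤ)) + (k.1 : ℤ) * ((j.1 : ℤ) - (ℓ.1 : ℤ))
        = -((k.1 : ℤ) * (ℓ.1 : ℤ)) := by ring
    have := h2
    rw [h4] at this
    exact this.symm
  rw [h3, ch_add]
  ring

open scoped Classical in
/-- few shifts have large correlation with any fixed direction. For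
`x ∈ ℝ^L`, a unit vector `Q`, and `h > 0`,
`N_Q(h) = #{ℓ : L^{−1/2}|⟨x, R_ℓ⁻¹ Q⟩| ≥ h} ≤ h⁻²·‖ℱ*x‖_∞²`,
where `⟨x, R_ℓ⁻¹ Q⟩ = ∑_j x_j Q_{j−ℓ}` and `‖ℱ*x‖_∞ = max_k |(ℱ*x)_k|`. -/
theorem few_shifts_have_large_correlation (L : ℕ) (x Q : Fin L → ℝ)
    (hQ : ∑ j, Q j ^ 2 = 1) (h : ℝ) (hh : 0 < h) :
    ((Finset.univ.filter fun ℓ : Fin L =>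
        h ≤ (Real.sqrt L)⁻¹ * |∑ j, x j * Q (j - ℓ)|).card : ℝ) ≤
      h⁻¹ ^ 2 * ⨆ k : Fin L, ‖dft L x k‖ ^ 2 := by
  rcases Nat.eq_zero_or_pos L with rfl | hL
  · simp at hQ
  haveI : NeZero L := ⟨hL.ne'⟩
  have hL0 : (L : ℝ) ≠ 0 := Nat.cast_ne_zero.mpr hL.ne'
  set c : Fin L → ℝ := fun ℓ => ∑ j, x j * Q (j - ℓ) with hc
  set X : Fin L → ℂ := fun k => ∑ j, (x j : ℂ) * ch L (-((k.1 : ℤ) * (j.1 : ℤ))) with hX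
  set Y : Fin L → ℂ := fun k => ∑ m, (Q m : ℂ) * ch L (-((k.1 : ℤ) * (m.1 : ℤ))) with hY
  set M := ⨆ k : Fin L, ‖dft L x k‖ ^ 2 with hM
  have conjY : ∀ k, (starRingEnd ℂ) (Y k) = ∑ m, (Q m : ℂ) * ch L ((k.1 : ℤ) * (m.1 : ℤ)) := by
    intro k
    rw [hY, map_sum]
    exact Finset.sum_congr rfl fun m _ => by
      rw [map_mul, ch_conj, neg_neg, Complex.conj_ofReal]
  have hdft : ∀ k, dft L x k = (Real.sqrt L : ℂ)⁻¹ * X k := by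
    intro k
    rw [dft, hX]
    congr 1
    refine Finset.sum_congr rfl fun j _ => ?_
    congr 1
    rw [ch]
    congr 1
    push_cast
    ring
  have habs : ∀ k, Complex.normSq (X k) = L * ‖dft L x k‖ ^ 2 := by
    intro k
    rw [hdft k, norm_mul, mul_pow, norm_inv, Complex.norm_real, Real.norm_eq_abs,
      abs_of_nonneg (Real.sqrt_nonneg _), inv_pow, Real.sq_sqrt (Nat.cast_nonneg L),
      Complex.sq_norm]
    field_simp
  have hbdd : BddAbove (Set.range fun k : Fin L => ‖dft L x k‖ ^ 2) :=
    Set.Finite.bddAbove (Set.finite_range _)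
  have hMle : ∀ k, Complex.normSq (X k) ≤ L * M := fun k => by
    rw [habs k]
    exact mul_le_mul_of_nonneg_left (le_ciSup hbdd k) (Nat.cast_nonneg L)
  -- Parseval for Q
  have hpQ : ∑ k : Fin L, (Y k * (starRingEnd ℂ) (Y k))
      = (L : ℂ) * ∑ j, ((Q j : ℂ) * (starRingEnd ℂ) (Q j : ℂ)) :=
    parseval L hL fun m => (Q m : ℂ)
  have hParQ : ∑ k : Fin L, Complex.normSq (Y k) = L := by
    have : ((∑ k : Fin L, Complex.normSq (Y k) : ℝ) : ℂ)
        = ((L * ∑ j, Q j ^ 2 : ℝ) : ℂ) := by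
      push_cast
      simp only [Complex.mul_conj, Complex.normSq_ofReal] at hpQ
      push_cast at hpQ
      rw [hpQ]
      congr 1
      exact Finset.sum_congr rfl fun j _ => by ring
    have := Complex.ofReal_inj.mp this
    rw [this, hQ, mul_one]
  -- key identity
  have hCk : ∀ k, (∑ ℓ, (c ℓ : ℂ) * ch L (-((k.1 : ℤ) * (ℓ.1 : ℤ))))
      = X k * (starRingEnd ℂ) (Y k) := by
    intro k
    rw [conjY]
    exact corr_dft L x Q k
  have hpC := parseval L hL fun ℓ => (c ℓ : ℂ)
  have hkeyC : ∑ k : Fin L, ((Complex.normSq (X k) : ℂ) * (Complex.normSq (Y k) : ℂ))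
      = (L : ℂ) * ∑ ℓ, ((c ℓ : ℂ)) ^ 2 := by
    calc ∑ k : Fin L, ((Complex.normSq (X k) : ℂ) * (Complex.normSq (Y k) : ℂ))
        = ∑ k : Fin L, ((∑ ℓ, (c ℓ : ℂ) * ch L (-((k.1 : ℤ) * (ℓ.1 : ℤ)))) *
            (starRingEnd ℂ) (∑ ℓ, (c ℓ : ℂ) * ch L (-((k.1 : ℤ) * (ℓ.1 : ℤ))))) := by
          refine Finset.sum_congr rfl fun k _ => ?_
          rw [hCk k, map_mul, Complex.conj_conj]
          rw [show X k * (starRingEnd ℂ) (Y k) * ((starRingEnd ℂ) (X k) * Y k)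
              = (X k * (starRingEnd ℂ) (X k)) * (Y k * (starRingEnd ℂ) (Y k)) by ring,
            Complex.mul_conj, Complex.mul_conj]
      _ = (L : ℂ) * ∑ ℓ, ((c ℓ : ℂ) * (starRingEnd ℂ) (c ℓ : ℂ)) := hpC
      _ = (L : ℂ) * ∑ ℓ, ((c ℓ : ℂ)) ^ 2 := by
          congr 1
          exact Finset.sum_congr rfl fun ℓ _ => by
            rw [Complex.conj_ofReal]; ring
  have hkeyR : ∑ k : Fin L, Complex.normSq (X k) * Complex.normSq (Y k)
      = L * ∑ ℓ, (c ℓ) ^ 2 := by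
    have : ((∑ k : Fin L, Complex.normSq (X k) * Complex.normSq (Y k) : ℝ) : ℂ)
        = ((L * ∑ ℓ, (c ℓ) ^ 2 : ℝ) : ℂ) := by
      push_cast
      exact hkeyC
    exact Complex.ofReal_inj.mp this
  have hcsum : ∑ ℓ, (c ℓ) ^ 2 ≤ L * M := by
    have h1 : ∑ k : Fin L, Complex.normSq (X k) * Complex.normSq (Y k)
        ≤ (L * M) * ∑ k : Fin L, Complex.normSq (Y k) := by
      rw [Finset.mul_sum]
      exact Finset.sum_le_sum fun k _ =>
        mul_le_mul_of_nonneg_right (hMle k) (Complex.normSq_nonneg _)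
    rw [hkeyR, hParQ] at h1
    have hLpos : (0 : ℝ) < L := Nat.cast_pos.mpr hL
    nlinarith
  -- Chebyshev
  set S := Finset.univ.filter fun ℓ : Fin L =>
    h ≤ (Real.sqrt L)⁻¹ * |∑ j, x j * Q (j - ℓ)| with hS
  have hterm : ∀ ℓ ∈ S, h ^ 2 ≤ (L : ℝ)⁻¹ * (c ℓ) ^ 2 := by
    intro ℓ hm
    rw [hS, Finset.mem_filter] at hm
    have h1 : h ^ 2 ≤ ((Real.sqrt L)⁻¹ * |∑ j, x j * Q (j - ℓ)|) ^ 2 :=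
      pow_le_pow_left₀ hh.le hm.2 2
    calc h ^ 2 ≤ ((Real.sqrt L)⁻¹ * |∑ j, x j * Q (j - ℓ)|) ^ 2 := h1
      _ = (L : ℝ)⁻¹ * (c ℓ) ^ 2 := by
          rw [mul_pow, sq_abs, inv_pow, Real.sq_sqrt (Nat.cast_nonneg L), hc]
  have hcard : (S.card : ℝ) * h ^ 2 ≤ M := by
    calc (S.card : ℝ) * h ^ 2 = ∑ _ℓ ∈ S, h ^ 2 := by
          rw [Finset.sum_const, nsmul_eq_mul]
      _ ≤ ∑ ℓ ∈ S, (L : ℝ)⁻¹ * (c ℓ) ^ 2 := Finset.sum_le_sum hterm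
      _ ≤ ∑ ℓ : Fin L, (L : ℝ)⁻¹ * (c ℓ) ^ 2 := by
          refine Finset.sum_le_sum_of_subset_of_nonneg (Finset.subset_univ S) ?_
          intro ℓ _ _
          positivity
      _ = (L : ℝ)⁻¹ * ∑ ℓ, (c ℓ) ^ 2 := by rw [Finset.mul_sum]
      _ ≤ (L : ℝ)⁻¹ * (L * M) := by
          refine mul_le_mul_of_nonneg_left hcsum (by positivity)
      _ = M := by field_simp
  have := (le_div_iff₀ (pow_pos hh 2)).mpr hcard
  calc (S.card : ℝ) ≤ M / h ^ 2 := this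
    _ = h⁻¹ ^ 2 * M := by rw [div_eq_mul_inv, inv_pow, mul_comm]


end MRAformal
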